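/- For p ≥ 2, let f be a unit vector in L^p(X,μ) and g a unit vector in L^{p'}(X,μ) where 1/p + 1/p' = 1, both real-valued and nonnegative. Then ∫ f g dμ ≤ 1 - ((p'-1)/4) ‖D_p(f) - g‖_{p'}^2, where D_p(f) = |f|^{p-2} f / ‖f‖_p^{p-1} is the duality map. -/

import Mathlib

open MeasureTheory

/-- The `L^p` norm (real-valued, via explicit integral). -/
noncomputable def Lnorm {X : Type*} [MeasurableSpace X] (μ : Measure X) (p : ℝ) (f : X → ℝ) : ℝ :=
  (∫ x, |f x| ^ p ∂μ) ^ (1 / p)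


lemma bern {q t : ℝ} (hq1 : 1 ≤ q) (hq2 : q ≤ 2) (ht : 0 ≤ t) :
    t ^ (q - 1) ≤ (2 - q) + (q - 1) * t := by
  have := Real.geom_mean_le_arith_mean2_weighted (by linarith : (0:ℝ) ≤ q - 1)
    (by linarith : (0:ℝ) ≤ 2 - q) ht (zero_le_one) (by ring)
  rw [Real.one_rpow, mul_one] at this
  linarith

lemma lem1 {q t : ℝ} (hq1 : 1 < q) (hq2 : q ≤ 2) (ht0 : 0 ≤ t) (ht1 : t ≤ 1) :
    (q - 1) / 2 * (1 - t) ^ 2 ≤ (q - 1) / q + t ^ q / q - t := by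
  have hq0 : (0:ℝ) < q := by linarith
  set G : ℝ → ℝ := fun t => (q - 1) / q + t ^ q / q - t - (q - 1) / 2 * (1 - t) ^ 2 with hG
  have hd : ∀ x ∈ Set.Ioo (0:ℝ) 1, HasDerivAt G (x ^ (q - 1) - 1 + (q - 1) * (1 - x)) x := by
    intro x hx
    have h1 : HasDerivAt (fun t : ℝ => t ^ q) (q * x ^ (q - 1)) x :=
      Real.hasDerivAt_rpow_const (Or.inl hx.1.ne')
    have h2 : HasDerivAt (fun t : ℝ => (1 - t) ^ 2) ((2 : ℕ) * (1 - x) ^ (2 - 1) * (-1)) x := by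
      exact (((hasDerivAt_id x).const_sub 1)).pow 2
    have h3 : HasDerivAt G (0 + q * x ^ (q - 1) / q - 1 - (q - 1) / 2 * ((2:ℕ) * (1 - x) ^ (2-1) * (-1))) x := by
      exact (((hasDerivAt_const x ((q-1)/q)).add (h1.div_const q)).sub (hasDerivAt_id x)).sub
        (h2.const_mul ((q-1)/2))
    convert h3 using 1
    field_simp
    ring
  have hanti : AntitoneOn G (Set.Icc 0 1) := by
    apply antitoneOn_of_deriv_nonpos (convex_Icc 0 1)
    · apply ContinuousOn.sub
      apply ContinuousOn.sub
      apply ContinuousOn.add continuousOn_const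
      · exact ((Real.continuous_rpow_const hq0.le).continuousOn).div_const q
      · exact continuousOn_id
      · fun_prop
    · rw [interior_Icc]
      intro x hx
      exact ((hd x hx).differentiableAt).differentiableWithinAt
    · rw [interior_Icc]
      intro x hx
      rw [(hd x hx).deriv]
      have := bern hq1.le hq2 hx.1.le
      linarith
  have h10 : G 1 ≤ G t := hanti ⟨ht0, ht1⟩ ⟨zero_le_one, le_refl 1⟩ ht1
  have : G 1 = 0 := by simp [hG, Real.one_rpow]; field_simp; ring
  simp only [hG] at h10 this
  linarith

lemma lem2 {q s : ℝ} (hq1 : 1 < q) (hq2 : q ≤ 2) (hs0 : 0 ≤ s) (hs1 : s ≤ 1) :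
    (q - 1) / 2 * (1 - s) ^ 2 ≤ (q - 1) / q * s ^ q + 1 / q - s ^ (q - 1) := by
  have hq0 : (0:ℝ) < q := by linarith
  set K : ℝ → ℝ := fun s => (q - 1) / q * s ^ q + 1 / q - s ^ (q - 1) - (q - 1) / 2 * (1 - s) ^ 2 with hK
  have hd : ∀ x ∈ Set.Ioo (0:ℝ) 1,
      HasDerivAt K ((q - 1) * x ^ (q - 1) - (q - 1) * x ^ (q - 2) + (q - 1) * (1 - x)) x := by
    intro x hx
    have h1 : HasDerivAt (fun t : ℝ => t ^ q) (q * x ^ (q - 1)) x :=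
      Real.hasDerivAt_rpow_const (Or.inl hx.1.ne')
    have h1' : HasDerivAt (fun t : ℝ => t ^ (q - 1)) ((q - 1) * x ^ (q - 1 - 1)) x :=
      Real.hasDerivAt_rpow_const (Or.inl hx.1.ne')
    have h2 : HasDerivAt (fun t : ℝ => (1 - t) ^ 2) ((2 : ℕ) * (1 - x) ^ (2 - 1) * (-1)) x :=
      (((hasDerivAt_id x).const_sub 1)).pow 2
    have h3 : HasDerivAt K ((q-1)/q * (q * x ^ (q - 1)) + 0 - (q - 1) * x ^ (q - 1 - 1)
        - (q - 1) / 2 * ((2:ℕ) * (1 - x) ^ (2-1) * (-1))) x := by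
      exact (((h1.const_mul ((q-1)/q)).add (hasDerivAt_const x (1/q))).sub h1').sub
        (h2.const_mul ((q-1)/2))
    convert h3 using 1
    have : q - 1 - 1 = q - 2 := by ring
    rw [this]
    field_simp
    ring
  have hanti : AntitoneOn K (Set.Icc 0 1) := by
    apply antitoneOn_of_deriv_nonpos (convex_Icc 0 1)
    · apply ContinuousOn.sub
      apply ContinuousOn.sub
      apply ContinuousOn.add
      · exact (Real.continuous_rpow_const hq0.le).continuousOn.const_smul ((q-1)/q) |>.congr (by intro x _; simp [smul_eq_mul])
      · exact continuousOn_const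
      · exact (Real.continuous_rpow_const (by linarith)).continuousOn
      · fun_prop
    · rw [interior_Icc]
      intro x hx
      exact ((hd x hx).differentiableAt).differentiableWithinAt
    · rw [interior_Icc]
      intro x hx
      rw [(hd x hx).deriv]
      -- need: (q-1) x^{q-1} - (q-1) x^{q-2} + (q-1)(1-x) ≤ 0
      have hxq2 : (1:ℝ) ≤ x ^ (q - 2) := by
        apply Real.one_le_rpow_of_pos_of_le_one_of_nonpos hx.1 hx.2.le (by linarith)
      have hxq1 : x ^ (q - 1) = x ^ (q - 2) * x := by
        rw [← Real.rpow_add_one hx.1.ne']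
        ring_nf
      nlinarith [hx.1.le, hx.2.le, sub_nonneg.2 hx.2.le, mul_nonneg (sub_nonneg.2 hx.2.le) (sub_nonneg.2 hxq2)]
  have h10 : K 1 ≤ K s := hanti ⟨hs0, hs1⟩ ⟨zero_le_one, le_refl 1⟩ hs1
  have : K 1 = 0 := by simp [hK, Real.one_rpow]; field_simp; ring
  simp only [hK] at h10 this
  linarith

lemma key {q c b : ℝ} (hq1 : 1 < q) (hq2 : q ≤ 2) (hc : 0 ≤ c) (hb : 0 ≤ b) :
    (q - 1) / 2 * (c - b) ^ 2 * max c b ^ (q - 2) ≤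
      (q - 1) / q * c ^ q + b ^ q / q - c ^ (q - 1) * b := by
  have hq0 : (0:ℝ) < q := by linarith
  rcases le_total b c with hbc | hcb
  · rcases eq_or_lt_of_le hc with hc0 | hc0
    · -- c = 0, hence b = 0
      have hb0 : b = 0 := le_antisymm (hbc.trans_eq hc0.symm) hb
      subst hb0
      rw [← hc0]
      simp [Real.zero_rpow hq0.ne', Real.zero_rpow (by linarith : q - 1 ≠ 0)]
    · have ht0 : 0 ≤ b / c := div_nonneg hb hc0.le
      have ht1 : b / c ≤ 1 := (div_le_one hc0).2 hbc
      have L := lem1 hq1 hq2 ht0 ht1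
      have hcq : (0:ℝ) < c ^ q := Real.rpow_pos_of_pos hc0 q
      have e1 : (b / c) ^ q * c ^ q = b ^ q := by
        rw [Real.div_rpow hb hc0.le]
        field_simp
      have e2 : (b / c) * c ^ q = c ^ (q - 1) * b := by
        have h : c ^ q = c ^ (q - 1) * c := by
          rw [← Real.rpow_add_one hc0.ne' (q - 1)]
          ring_nf
        rw [h]
        field_simp
      have e3 : (1 - b / c) ^ 2 * c ^ q = (c - b) ^ 2 * c ^ (q - 2) := by
        have hc2 : c ^ q = c ^ (2:ℕ) * c ^ (q - 2) := by
          rw [← Real.rpow_natCast c 2, ← Real.rpow_add hc0]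
          norm_num
        rw [hc2]
        have h4 : (1 - b / c) ^ 2 * (c:ℝ) ^ (2:ℕ) = (c - b) ^ 2 := by
          field_simp
          try ring
        calc (1 - b/c)^2 * (c^(2:ℕ) * c^(q-2)) = ((1 - b/c)^2 * c^(2:ℕ)) * c^(q-2) := by ring
          _ = (c - b)^2 * c^(q-2) := by rw [h4]
      rw [max_eq_left hbc]
      have h := mul_le_mul_of_nonneg_right L hcq.le
      have lhs_eq : (q-1)/2*(1 - b/c)^2 * c^q = (q-1)/2*(c-b)^2*c^(q-2) := by
        linear_combination ((q-1)/2) * e3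
      have rhs_eq : ((q-1)/q + (b/c)^q/q - (b/c)) * c^q
          = (q-1)/q*c^q + b^q/q - c^(q-1)*b := by
        linear_combination e1/q - e2
      linarith [h, lhs_eq, rhs_eq]
  · rcases eq_or_lt_of_le hb with hb0 | hb0
    · have hc0 : c = 0 := le_antisymm (hcb.trans_eq hb0.symm) hc
      subst hc0
      rw [← hb0]
      simp [Real.zero_rpow hq0.ne', Real.zero_rpow (by linarith : q - 1 ≠ 0)]
    · have hs0 : 0 ≤ c / b := div_nonneg hc hb0.le
      have hs1 : c / b ≤ 1 := (div_le_one hb0).2 hcb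
      have L := lem2 hq1 hq2 hs0 hs1
      have hbq : (0:ℝ) < b ^ q := Real.rpow_pos_of_pos hb0 q
      have e1 : (c / b) ^ q * b ^ q = c ^ q := by
        rw [Real.div_rpow hc hb0.le]
        field_simp
      have e2 : (c / b) ^ (q - 1) * b ^ q = c ^ (q - 1) * b := by
        rw [Real.div_rpow hc hb0.le]
        have h : b ^ q = b ^ (q - 1) * b := by
          rw [← Real.rpow_add_one hb0.ne' (q - 1)]
          ring_nf
        rw [h]
        have hbq1 : (0:ℝ) < b ^ (q-1) := Real.rpow_pos_of_pos hb0 _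
        field_simp
      have e3 : (1 - c / b) ^ 2 * b ^ q = (c - b) ^ 2 * b ^ (q - 2) := by
        have hb2 : b ^ q = b ^ (2:ℕ) * b ^ (q - 2) := by
          rw [← Real.rpow_natCast b 2, ← Real.rpow_add hb0]
          norm_num
        rw [hb2]
        have h4 : (1 - c / b) ^ 2 * (b:ℝ) ^ (2:ℕ) = (c - b) ^ 2 := by
          field_simp
          try ring
        calc (1 - c/b)^2 * (b^(2:ℕ) * b^(q-2)) = ((1 - c/b)^2 * b^(2:ℕ)) * b^(q-2) := by ring
          _ = (c - b)^2 * b^(q-2) := by rw [h4]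
      rw [max_eq_right hcb]
      have h := mul_le_mul_of_nonneg_right L hbq.le
      have lhs_eq : (q-1)/2*(1 - c/b)^2 * b^q = (q-1)/2*(c-b)^2*b^(q-2) := by
        linear_combination ((q-1)/2) * e3
      have rhs_eq : ((q-1)/q * (c/b)^q + 1/q - (c/b)^(q-1)) * b^q
          = (q-1)/q*c^q + b^q/q - c^(q-1)*b := by
        linear_combination ((q-1)/q) * e1 - e2
      linarith [h, lhs_eq, rhs_eq]

lemma master' {p q a b : ℝ} (hq1 : 1 < q) (hq2 : q ≤ 2)
    (hpq : (p - 1) * q = p) (hpq1 : (p - 1) * (q - 1) = 1) (hqp : (q - 1) / q = 1 / p)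
    (ha : 0 ≤ a) (hb : 0 ≤ b) :
    (q - 1) / 2 * (a ^ (p - 1) - b) ^ 2 * (max (a ^ (p - 1)) b) ^ (q - 2) ≤
      1 / p * a ^ p + 1 / q * b ^ q - a * b := by
  have hc : (0:ℝ) ≤ a ^ (p - 1) := Real.rpow_nonneg ha _
  have h1 : (a ^ (p - 1)) ^ q = a ^ p := by
    rw [← Real.rpow_mul ha, hpq]
  have h2 : (a ^ (p - 1)) ^ (q - 1) = a := by
    rw [← Real.rpow_mul ha, hpq1, Real.rpow_one]
  have := key hq1 hq2 hc hb
  rw [h1, h2, hqp] at this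
  calc (q - 1) / 2 * (a ^ (p - 1) - b) ^ 2 * (max (a ^ (p - 1)) b) ^ (q - 2)
      ≤ 1 / p * a ^ p + b ^ q / q - a * b := this
    _ = 1 / p * a ^ p + 1 / q * b ^ q - a * b := by ring

/-- Hölder's inequality with remainder (eq. (main1)), for nonnegative real functions:
for `p ≥ 2`, unit vectors `f ∈ L^p`, `g ∈ L^{p'}`,
`∫ f g ≤ 1 - ((p'-1)/4) ‖D_p(f) - g‖_{p'}^2`, where `D_p(f) = |f|^{p-2} f` since `‖f‖_p = 1`. -/
theorem stmt0 {X : Type*} [MeasurableSpace X] (μ : Measure X) (p p' : ℝ)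
    (hp : 2 ≤ p) (hpp' : 1 / p + 1 / p' = 1)
    (f g : X → ℝ) (hf0 : ∀ x, 0 ≤ f x) (hg0 : ∀ x, 0 ≤ g x)
    (hf : MemLp f (ENNReal.ofReal p) μ) (hg : MemLp g (ENNReal.ofReal p') μ)
    (hfn : Lnorm μ p f = 1) (hgn : Lnorm μ p' g = 1) :
    ∫ x, f x * g x ∂μ ≤
      1 - (p' - 1) / 4 * (Lnorm μ p' (fun x => |f x| ^ (p - 2) * f x - g x)) ^ 2 := by
  set q := p' with hq_def
  -- basic exponent arithmetic
  have hp0 : (0:ℝ) < p := by linarith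
  have h1p : 1 / p ≤ 1 / 2 := by
    apply one_div_le_one_div_of_le <;> linarith
  have h1p0 : 0 < 1 / p := by positivity
  have hq_inv : 1 / q = 1 - 1 / p := by linarith
  have hq_inv_pos : 0 < 1 / q := by rw [hq_inv]; linarith
  have hq0 : (0:ℝ) < q := by
    rcases lt_trichotomy q 0 with h | h | h
    · exfalso; have : 1 / q < 0 := by exact one_div_neg.2 h
      linarith
    · exfalso; rw [h] at hq_inv_pos; simp at hq_inv_pos
    · exact h
  have hinv : 1 / q * q = 1 := by field_simp
  have hq1 : 1 < q := by
    have h1 : 1 / q < 1 := by linarith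
    nlinarith [hinv, mul_pos (by linarith : (0:ℝ) < 1 - 1/q) hq0]
  have hq2 : q ≤ 2 := by
    have h2 : 1 / 2 ≤ 1 / q := by linarith
    nlinarith [hinv, mul_le_mul_of_nonneg_right h2 hq0.le]
  have hpq' : q + p = p * q := by
    field_simp at hpp'
    linarith
  have hpq : (p - 1) * q = p := by linear_combination -hpq'
  have hpq1 : (p - 1) * (q - 1) = 1 := by linear_combination hpq
  have hqp : (q - 1) / q = 1 / p := by
    rw [div_eq_div_iff hq0.ne' hp0.ne']
    linear_combination hpq
  -- measurability
  have hfm : AEMeasurable f μ := hf.1.aemeasurable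
  have hgm : AEMeasurable g μ := hg.1.aemeasurable
  -- integrability of f^p and g^q
  have hFp : Integrable (fun x => f x ^ p) μ := by
    have h := hf.integrable_norm_rpow (by simp [ENNReal.ofReal_eq_zero]; linarith)
      ENNReal.ofReal_ne_top
    have h2 : (fun x => ‖f x‖ ^ (ENNReal.ofReal p).toReal) = fun x => f x ^ p := by
      funext x
      rw [ENNReal.toReal_ofReal hp0.le, Real.norm_eq_abs, abs_of_nonneg (hf0 x)]
    rwa [h2] at h
  have hGq : Integrable (fun x => g x ^ q) μ := by
    have h := hg.integrable_norm_rpow (by simp [ENNReal.ofReal_eq_zero]; linarith)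
      ENNReal.ofReal_ne_top
    have h2 : (fun x => ‖g x‖ ^ (ENNReal.ofReal q).toReal) = fun x => g x ^ q := by
      funext x
      rw [ENNReal.toReal_ofReal hq0.le, Real.norm_eq_abs, abs_of_nonneg (hg0 x)]
    rwa [h2] at h
  have hbound : Integrable (fun x => f x ^ p + g x ^ q) μ := hFp.add hGq
  -- unit norms
  have hIf : ∫ x, f x ^ p ∂μ = 1 := by
    have habs : (fun x => |f x| ^ p) = fun x => f x ^ p := by
      funext x; rw [abs_of_nonneg (hf0 x)]
    have hI0 : 0 ≤ ∫ x, f x ^ p ∂μ :=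
      integral_nonneg fun x => Real.rpow_nonneg (hf0 x) _
    have h := hfn
    rw [Lnorm, habs] at h
    have := congrArg (fun y : ℝ => y ^ p) h
    simp only [Real.one_rpow] at this
    rwa [← Real.rpow_mul hI0, one_div, inv_mul_cancel₀ hp0.ne', Real.rpow_one] at this
  have hIg : ∫ x, g x ^ q ∂μ = 1 := by
    have habs : (fun x => |g x| ^ q) = fun x => g x ^ q := by
      funext x; rw [abs_of_nonneg (hg0 x)]
    have hI0 : 0 ≤ ∫ x, g x ^ q ∂μ :=
      integral_nonneg fun x => Real.rpow_nonneg (hg0 x) _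
    have h := hgn
    rw [Lnorm, habs] at h
    have := congrArg (fun y : ℝ => y ^ q) h
    simp only [Real.one_rpow] at this
    rwa [← Real.rpow_mul hI0, one_div, inv_mul_cancel₀ hq0.ne', Real.rpow_one] at this
  -- the functions h and M
  set D : X → ℝ := fun x => f x ^ (p - 1) with hD_def
  set h : X → ℝ := fun x => D x - g x with hh_def
  set M : X → ℝ := fun x => max (D x) (g x) with hM_def
  have hD0 : ∀ x, 0 ≤ D x := fun x => Real.rpow_nonneg (hf0 x) _
  have hM0 : ∀ x, 0 ≤ M x := fun x => le_trans (hD0 x) (le_max_left _ _)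
  have hDm : AEMeasurable D μ := by fun_prop
  have hMm : AEMeasurable M μ := by fun_prop
  have hhm : AEMeasurable h μ := by fun_prop
  have hDq : ∀ x, D x ^ q = f x ^ p := by
    intro x
    rw [hD_def, ← Real.rpow_mul (hf0 x), hpq]
  -- pointwise bounds
  have hMq_le : ∀ x, M x ^ q ≤ f x ^ p + g x ^ q := by
    intro x
    rcases le_total (g x) (D x) with hx | hx
    · rw [hM_def]; simp only [max_eq_left hx]
      rw [hDq x]
      exact le_add_of_nonneg_right (Real.rpow_nonneg (hg0 x) _)
    · rw [hM_def]; simp only [max_eq_right hx]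
      exact le_add_of_nonneg_left (Real.rpow_nonneg (hf0 x) _)
  have habs_le : ∀ x, |h x| ≤ M x := by
    intro x
    rw [abs_le]
    constructor
    · have := hD0 x
      have := le_max_right (D x) (g x)
      rw [hh_def]; simp only; rw [hM_def]; simp only
      linarith
    · have := hg0 x
      have := le_max_left (D x) (g x)
      rw [hh_def]; simp only; rw [hM_def]; simp only
      linarith
  have hT_le : ∀ x, h x ^ 2 * M x ^ (q - 2) ≤ M x ^ q := by
    intro x
    rcases eq_or_lt_of_le (hM0 x) with hMx | hMx
    · have hhx : h x = 0 := by
        have := habs_le x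
        rw [← hMx] at this
        exact abs_eq_zero.1 (le_antisymm this (abs_nonneg _))
      rw [hhx, ← hMx]
      simp [Real.zero_rpow hq0.ne']
    · have h2 : h x ^ 2 ≤ M x ^ (2:ℕ) := by
        rw [← sq_abs]
        exact pow_le_pow_left₀ (abs_nonneg _) (habs_le x) 2
      have hsplit : M x ^ q = M x ^ (2:ℕ) * M x ^ (q - 2) := by
        rw [← Real.rpow_natCast (M x) 2, ← Real.rpow_add hMx]
        norm_num
      rw [hsplit]
      exact mul_le_mul_of_nonneg_right h2 (Real.rpow_nonneg (hM0 x) _)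
  have hhq_le : ∀ x, |h x| ^ q ≤ M x ^ q :=
    fun x => Real.rpow_le_rpow (abs_nonneg _) (habs_le x) hq0.le
  -- integrability of the remainder pieces
  have IntMq : Integrable (fun x => M x ^ q) μ := by
    apply hbound.mono' ((show AEMeasurable (fun x => M x ^ q) μ by fun_prop).aestronglyMeasurable)
    · exact ae_of_all _ fun x => by
        rw [Real.norm_eq_abs, abs_of_nonneg (Real.rpow_nonneg (hM0 x) _)]
        exact hMq_le x
  have IntT : Integrable (fun x => h x ^ 2 * M x ^ (q - 2)) μ := by
    apply hbound.mono'
    · exact (show AEMeasurable (fun x => h x ^ 2 * M x ^ (q - 2)) μ by fun_prop).aestronglyMeasurable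
    · exact ae_of_all _ fun x => by
        rw [Real.norm_eq_abs, abs_of_nonneg
          (mul_nonneg (sq_nonneg _) (Real.rpow_nonneg (hM0 x) _))]
        exact (hT_le x).trans (hMq_le x)
  have IntJ : Integrable (fun x => |h x| ^ q) μ := by
    apply hbound.mono'
    · exact (show AEMeasurable (fun x => |h x| ^ q) μ by fun_prop).aestronglyMeasurable
    · exact ae_of_all _ fun x => by
        rw [Real.norm_eq_abs, abs_of_nonneg (Real.rpow_nonneg (abs_nonneg _) _)]
        exact (hhq_le x).trans (hMq_le x)
  -- the master pointwise inequality
  have hmaster : ∀ x, (q - 1) / 2 * (h x ^ 2 * M x ^ (q - 2)) ≤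
      1 / p * f x ^ p + 1 / q * g x ^ q - f x * g x := by
    intro x
    have := master' hq1 hq2 hpq hpq1 hqp (hf0 x) (hg0 x)
    calc (q - 1) / 2 * (h x ^ 2 * M x ^ (q - 2))
        = (q - 1) / 2 * (f x ^ (p-1) - g x) ^ 2 * (max (f x ^ (p-1)) (g x)) ^ (q - 2) := by
          rw [hh_def, hM_def, hD_def]; ring
      _ ≤ _ := this
  have Intfg : Integrable (fun x => f x * g x) μ := by
    apply ((hFp.const_mul (1/p)).add (hGq.const_mul (1/q))).mono'
      ((hfm.mul hgm).aestronglyMeasurable)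
    refine ae_of_all _ fun x => ?_
    rw [Real.norm_eq_abs, Pi.mul_apply, abs_of_nonneg (mul_nonneg (hf0 x) (hg0 x))]
    have h1 := hmaster x
    have h2 : 0 ≤ (q - 1) / 2 * (h x ^ 2 * M x ^ (q - 2)) :=
      mul_nonneg (by linarith) (mul_nonneg (sq_nonneg _) (Real.rpow_nonneg (hM0 x) _))
    show f x * g x ≤ 1 / p * f x ^ p + 1 / q * g x ^ q
    linarith
  -- the main integral inequality
  set T : ℝ := ∫ x, h x ^ 2 * M x ^ (q - 2) ∂μ with hT_def
  have hT0 : 0 ≤ T := integral_nonneg fun x => mul_nonneg (sq_nonneg _) (Real.rpow_nonneg (hM0 x) _)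
  have key1 : (q - 1) / 2 * T ≤ 1 - ∫ x, f x * g x ∂μ := by
    have hint : ∫ x, ((q - 1) / 2 * (h x ^ 2 * M x ^ (q - 2))) ∂μ ≤
        ∫ x, (1 / p * f x ^ p + 1 / q * g x ^ q - f x * g x) ∂μ := by
      apply integral_mono (IntT.const_mul _)
        (((hFp.const_mul (1/p)).add (hGq.const_mul (1/q))).sub Intfg)
      exact hmaster
    have hI1 : Integrable (fun x => 1 / p * f x ^ p) μ := hFp.const_mul _
    have hI2 : Integrable (fun x => 1 / q * g x ^ q) μ := hGq.const_mul _
    have hI12 : Integrable (fun x => 1 / p * f x ^ p + 1 / q * g x ^ q) μ := hI1.add hI2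
    rw [integral_const_mul] at hint
    rw [integral_sub hI12 Intfg, integral_add hI1 hI2,
      integral_const_mul, integral_const_mul, hIf, hIg] at hint
    calc (q - 1)/2 * T ≤ 1/p * 1 + 1/q * 1 - ∫ x, f x * g x ∂μ := hint
      _ = 1 - ∫ x, f x * g x ∂μ := by rw [mul_one, mul_one, hpp']
  -- identify the Lnorm in the statement
  set J : ℝ := ∫ x, |h x| ^ q ∂μ with hJ_def
  have hJ0 : 0 ≤ J := integral_nonneg fun x => Real.rpow_nonneg (abs_nonneg _) _
  have hLnorm : Lnorm μ q (fun x => |f x| ^ (p - 2) * f x - g x) = J ^ (1/q) := by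
    rw [Lnorm]
    congr 1
    apply integral_congr_ae
    refine ae_of_all _ fun x => ?_
    congr 2
    rw [hh_def]
    simp only
    congr 1
    rw [hD_def]
    simp only
    rw [abs_of_nonneg (hf0 x)]
    rcases eq_or_lt_of_le (hf0 x) with hfx | hfx
    · rw [← hfx, Real.zero_rpow (by linarith : p - 1 ≠ 0), mul_zero]
    · rw [← Real.rpow_add_one hfx.ne']
      ring_nf
  -- the Hölder step : J^(2/q) ≤ 2 * T
  have hJT : J ^ ((2:ℝ)/q) ≤ 2 * T := by
    rcases eq_or_lt_of_le hq2 with hq2' | hq2'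
    · -- q = 2
      have hTJ : T = J := by
        rw [hT_def, hJ_def]
        apply integral_congr_ae
        refine ae_of_all _ fun x => ?_
        rw [hq2']
        norm_num
      rw [show ((2:ℝ)/q) = 1 by rw [hq2']; norm_num, Real.rpow_one]
      rw [hTJ] at hT0 ⊢
      linarith
    · -- q < 2
      have h2q : (0:ℝ) < 2 - q := by linarith
      set r : ℝ := 2 / q with hr_def
      set r' : ℝ := 2 / (2 - q) with hr'_def
      have hr1 : 1 < r := (one_lt_div hq0).2 hq2'
      have hr0 : 0 < r := by linarith
      have hr'0 : 0 < r' := by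
        rw [hr'_def]
        exact div_pos two_pos h2q
      have hrc : r.HolderConjugate r' := by
        constructor
        · rw [hr_def, hr'_def, inv_div, inv_div]
          ring
        · exact hr0
        · exact hr'0
      set A : X → ℝ := fun x => (h x ^ 2 * M x ^ (q - 2)) ^ (q / 2) with hA_def
      set B : X → ℝ := fun x => (M x ^ q) ^ ((2 - q) / 2) with hB_def
      have hbase0 : ∀ x, (0:ℝ) ≤ h x ^ 2 * M x ^ (q - 2) :=
        fun x => mul_nonneg (sq_nonneg _) (Real.rpow_nonneg (hM0 x) _)
      have hA0 : ∀ x, 0 ≤ A x := fun x => Real.rpow_nonneg (hbase0 x) _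
      have hB0 : ∀ x, 0 ≤ B x :=
        fun x => Real.rpow_nonneg (Real.rpow_nonneg (hM0 x) _) _
      have eAr : ∀ x, A x ^ r = h x ^ 2 * M x ^ (q - 2) := by
        intro x
        rw [hA_def]
        simp only
        rw [← Real.rpow_mul (hbase0 x), show (q/2) * r = 1 by
          rw [hr_def, div_mul_div_comm,
            div_eq_one_iff_eq (by positivity : (2:ℝ)*q ≠ 0)]; ring, Real.rpow_one]
      have eBr : ∀ x, B x ^ r' = M x ^ q := by
        intro x
        rw [hB_def]
        simp only
        rw [← Real.rpow_mul (Real.rpow_nonneg (hM0 x) _), show ((2-q)/2) * r' = 1 by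
          rw [hr'_def, div_mul_div_comm,
            div_eq_one_iff_eq (ne_of_gt (mul_pos two_pos h2q))]; ring, Real.rpow_one]
      have eAB : ∀ x, A x * B x = |h x| ^ q := by
        intro x
        rcases eq_or_lt_of_le (hM0 x) with hMx | hMx
        · have hhx : h x = 0 := by
            have := habs_le x
            rw [← hMx] at this
            exact abs_eq_zero.1 (le_antisymm this (abs_nonneg _))
          rw [hA_def, hB_def]
          simp only
          rw [hhx]
          rw [abs_zero, Real.zero_rpow hq0.ne']
          rw [show (0:ℝ)^2 = 0 by norm_num, zero_mul, Real.zero_rpow (by positivity : q/2 ≠ 0), zero_mul]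
        · rw [hA_def, hB_def]
          simp only
          rw [Real.mul_rpow (sq_nonneg _) (Real.rpow_nonneg (hM0 x) _)]
          rw [← sq_abs (h x), ← Real.rpow_natCast (|h x|) 2, ← Real.rpow_mul (abs_nonneg _)]
          rw [← Real.rpow_mul (hM0 x), ← Real.rpow_mul (hM0 x)]
          rw [show ((2:ℕ):ℝ) * (q/2) = q by push_cast; ring]
          rw [mul_assoc, ← Real.rpow_add hMx,
            show (q-2)*(q/2) + q*((2-q)/2) = (0:ℝ) by ring, Real.rpow_zero, mul_one]
      -- Memℒp facts
      have hA_mem : MemLp A (ENNReal.ofReal r) μ := by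
        have hAm : AEStronglyMeasurable A μ :=
          (show AEMeasurable A μ by fun_prop).aestronglyMeasurable
        have hne0 : ENNReal.ofReal r ≠ 0 := by
          simp only [ne_eq, ENNReal.ofReal_eq_zero, not_le]
          linarith
        apply (memLp_norm_rpow_iff hAm hne0 ENNReal.ofReal_ne_top).1
        rw [ENNReal.div_self hne0 ENNReal.ofReal_ne_top, memLp_one_iff_integrable]
        have heq : (fun x => ‖A x‖ ^ (ENNReal.ofReal r).toReal)
            = fun x => h x ^ 2 * M x ^ (q - 2) := by
          funext x
          rw [ENNReal.toReal_ofReal hr0.le, Real.norm_eq_abs, abs_of_nonneg (hA0 x), eAr x]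
        rw [heq]
        exact IntT
      have hB_mem : MemLp B (ENNReal.ofReal r') μ := by
        have hBm : AEStronglyMeasurable B μ :=
          (show AEMeasurable B μ by fun_prop).aestronglyMeasurable
        have hne0 : ENNReal.ofReal r' ≠ 0 := by
          simp only [ne_eq, ENNReal.ofReal_eq_zero, not_le]
          linarith
        apply (memLp_norm_rpow_iff hBm hne0 ENNReal.ofReal_ne_top).1
        rw [ENNReal.div_self hne0 ENNReal.ofReal_ne_top, memLp_one_iff_integrable]
        have heq : (fun x => ‖B x‖ ^ (ENNReal.ofReal r').toReal)
            = fun x => M x ^ q := by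
          funext x
          rw [ENNReal.toReal_ofReal hr'0.le, Real.norm_eq_abs, abs_of_nonneg (hB0 x), eBr x]
        rw [heq]
        exact IntMq
      -- Hölder
      have hHold := integral_mul_le_Lp_mul_Lq_of_nonneg hrc (ae_of_all _ hA0)
        (ae_of_all _ hB0) hA_mem hB_mem
      have e1 : ∫ x, A x * B x ∂μ = J := by
        rw [hJ_def]
        exact integral_congr_ae (ae_of_all _ fun x => eAB x)
      have e2 : ∫ x, A x ^ r ∂μ = T := by
        rw [hT_def]
        exact integral_congr_ae (ae_of_all _ fun x => eAr x)
      set S : ℝ := ∫ x, M x ^ q ∂μ with hS_def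
      have e3 : ∫ x, B x ^ r' ∂μ = S := by
        rw [hS_def]
        exact integral_congr_ae (ae_of_all _ fun x => eBr x)
      have hS0 : 0 ≤ S := integral_nonneg fun x => Real.rpow_nonneg (hM0 x) _
      have hS2 : S ≤ 2 := by
        have hmono := integral_mono IntMq hbound hMq_le
        rw [integral_add hFp hGq, hIf, hIg] at hmono
        linarith
      rw [e1, e2, e3] at hHold
      -- hHold : J ≤ T ^ (1/r) * S ^ (1/r')
      have hexp1 : (1:ℝ)/r = q/2 := by rw [hr_def, one_div_div]
      have hexp2 : (1:ℝ)/r' = (2-q)/2 := by rw [hr'_def, one_div_div]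
      rw [hexp1, hexp2] at hHold
      have hS_pow : S ^ ((2-q)/2) ≤ 2 ^ ((2-q)/2) :=
        Real.rpow_le_rpow hS0 hS2 (by linarith)
      have hJle : J ≤ T ^ (q/2) * 2 ^ ((2-q)/2) :=
        hHold.trans (mul_le_mul_of_nonneg_left hS_pow (Real.rpow_nonneg hT0 _))
      have hpow := Real.rpow_le_rpow hJ0 hJle (by positivity : (0:ℝ) ≤ 2/q)
      have hexpand : (T ^ (q/2) * 2 ^ ((2-q)/2)) ^ ((2:ℝ)/q)
          = T * 2 ^ ((2-q)/q) := by
        rw [Real.mul_rpow (Real.rpow_nonneg hT0 _) (Real.rpow_nonneg (by norm_num) _)]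
        rw [← Real.rpow_mul hT0, ← Real.rpow_mul (by norm_num : (0:ℝ) ≤ 2)]
        rw [show (q/2) * (2/q) = 1 by field_simp, Real.rpow_one]
        rw [show ((2-q)/2) * (2/q) = (2-q)/q by
          rw [div_mul_div_comm, div_eq_div_iff (by positivity) hq0.ne']; ring]
      rw [hexpand] at hpow
      have h2le : (2:ℝ) ^ ((2-q)/q) ≤ 2 := by
        calc (2:ℝ) ^ ((2-q)/q) ≤ 2 ^ (1:ℝ) :=
          Real.rpow_le_rpow_of_exponent_le one_le_two ((div_le_one hq0).2 (by linarith))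
        _ = 2 := Real.rpow_one 2
      calc J ^ ((2:ℝ)/q) ≤ T * 2 ^ ((2-q)/q) := hpow
        _ ≤ T * 2 := mul_le_mul_of_nonneg_left h2le hT0
        _ = 2 * T := by ring
  -- conclusion
  rw [hLnorm]
  have hN2 : (J ^ ((1:ℝ)/q)) ^ 2 = J ^ ((2:ℝ)/q) := by
    rw [← Real.rpow_natCast (J ^ ((1:ℝ)/q)) 2, ← Real.rpow_mul hJ0]
    norm_num
    ring_nf
  rw [hN2]
  have : (q - 1) / 4 * J ^ ((2:ℝ)/q) ≤ (q - 1) / 2 * T := by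
    have := mul_le_mul_of_nonneg_left hJT (by linarith : (0:ℝ) ≤ (q-1)/4)
    linarith
  linarith
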